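/- For any s > −1 and any integer x ≥ 1, the series ∑_{n ≥ x} n^{−(2+s/2)}·exp(−x²/n) satisfies the asymptotics: as x → ∞, x^{2+s}·∑_{n ≥ x} n^{−(2+s/2)}·e^{−x²/n} converges to ∫_0^∞ u^{−(2+s/2)}·e^{−1/u} du. -/

import Mathlib

open Set MeasureTheory Filter

noncomputable def embF (p u : ℝ) : ℝ := u ^ (-p) * Real.exp (-1 / u)

lemma embF_nonneg (p : ℝ) {u : ℝ} (hu : 0 ≤ u) : 0 ≤ embF p u := by
  unfold embF; positivity

lemma embF_le_factorial (p : ℝ) (hp : 0 ≤ p) {u : ℝ} (hu : 0 < u) :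
    embF p u ≤ (Nat.ceil p).factorial := by
  have h1 : (1 : ℝ) ≤ (Nat.ceil p).factorial := by
    exact_mod_cast Nat.one_le_iff_ne_zero.mpr (Nat.factorial_ne_zero _)
  unfold embF
  rcases le_or_gt 1 u with h | h
  · have h2 : u ^ (-p) ≤ 1 := Real.rpow_le_one_of_one_le_of_nonpos h (by linarith)
    have h3 : Real.exp (-1 / u) ≤ 1 :=
      Real.exp_le_one_iff.mpr (by rw [neg_div]; exact neg_nonpos.mpr (by positivity))
    calc u ^ (-p) * Real.exp (-1/u) ≤ 1 * 1 :=
          mul_le_mul h2 h3 (Real.exp_pos _).le zero_le_one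
    _ = 1 := by ring
    _ ≤ _ := h1
  · set k := Nat.ceil p with hk
    have hui : (1:ℝ) ≤ u⁻¹ := one_le_inv_iff₀.2 ⟨hu, h.le⟩
    have hku : u ^ (-p) = (u⁻¹) ^ p := by
      rw [Real.rpow_neg hu.le, ← Real.inv_rpow hu.le]
    have h2 : (u⁻¹) ^ p ≤ (u⁻¹) ^ (k:ℝ) :=
      Real.rpow_le_rpow_of_exponent_le hui (Nat.le_ceil p)
    have h3 : (u⁻¹) ^ (k:ℝ) = (u⁻¹) ^ k := Real.rpow_natCast _ _
    have h4 : (u⁻¹) ^ k ≤ (k.factorial : ℝ) * Real.exp u⁻¹ := by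
      have := Real.pow_div_factorial_le_exp (x := u⁻¹) (by positivity) k
      have hkf : (0:ℝ) < k.factorial := by exact_mod_cast (Nat.factorial_pos k)
      calc (u⁻¹)^k = ((u⁻¹)^k / k.factorial) * k.factorial := by field_simp
      _ ≤ Real.exp u⁻¹ * k.factorial := mul_le_mul_of_nonneg_right this hkf.le
      _ = _ := by ring
    have h5 : Real.exp (-1/u) = (Real.exp u⁻¹)⁻¹ := by
      rw [← Real.exp_neg]; congr 1; field_simp
    calc u ^ (-p) * Real.exp (-1/u) ≤ ((k.factorial : ℝ) * Real.exp u⁻¹) * (Real.exp u⁻¹)⁻¹ := by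
          rw [hku, h5]
          exact mul_le_mul_of_nonneg_right (h2.trans_eq h3 |>.trans h4) (by positivity)
    _ = (k.factorial : ℝ) := by field_simp

lemma embF_anti (p : ℝ) (hp : 1 ≤ p) {u v : ℝ} (hu : 1 ≤ u) (huv : u ≤ v) :
    embF p v ≤ embF p u := by
  have hu0 : (0:ℝ) < u := lt_of_lt_of_le one_pos hu
  have hv0 : (0:ℝ) < v := lt_of_lt_of_le hu0 huv
  unfold embF
  rw [Real.rpow_def_of_pos hu0, Real.rpow_def_of_pos hv0, ← Real.exp_add, ← Real.exp_add]
  apply Real.exp_le_exp.mpr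
  have hlog1 : Real.log (u/v) ≤ u/v - 1 := Real.log_le_sub_one_of_pos (by positivity)
  have hlog2 : Real.log (u/v) = Real.log u - Real.log v := Real.log_div hu0.ne' hv0.ne'
  have hlognn : 0 ≤ Real.log v - Real.log u := by
    have := Real.log_le_log hu0 huv
    linarith
  have hpmul : Real.log v - Real.log u ≤ p * (Real.log v - Real.log u) :=
    le_mul_of_one_le_left hlognn hp
  have key : 1/u - 1/v ≤ 1 - u/v := by
    have e1 : 1/u - 1/v = (v - u)/(u*v) := by field_simp
    have e2 : 1 - u/v = (v - u)/v := by field_simp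
    rw [e1, e2]
    exact div_le_div_of_nonneg_left (by linarith) hv0 (by nlinarith)
  have h1u : -1/u = -(1/u) := by ring
  have h1v : -1/v = -(1/v) := by ring
  nlinarith [hpmul, key, hlog1, hlog2]

lemma embF_term_eq (p : ℝ) {x n : ℕ} (hx : 1 ≤ x) (hn : 1 ≤ n) :
    embF p ((n:ℝ)/(x:ℝ)^2) / (x:ℝ)^2
      = (x:ℝ) ^ (2*p - 2) * ((n:ℝ) ^ (-p) * Real.exp (-(x:ℝ)^2/(n:ℝ))) := by
  have hX : (0:ℝ) < x := by exact_mod_cast hx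
  have hN : (0:ℝ) < n := by exact_mod_cast hn
  unfold embF
  have e1 : ((n:ℝ)/(x:ℝ)^2) ^ (-p) = (n:ℝ)^(-p) * ((x:ℝ)^2)^p := by
    rw [Real.div_rpow hN.le (by positivity), Real.rpow_neg (by positivity : (0:ℝ) ≤ (x:ℝ)^2)]
    field_simp
  have e2 : ((x:ℝ)^2)^p = (x:ℝ)^(2*p) := by
    rw [← Real.rpow_natCast (x:ℝ) 2, ← Real.rpow_mul hX.le]
    norm_num
  have e3 : (-1) / ((n:ℝ)/(x:ℝ)^2) = -(x:ℝ)^2/(n:ℝ) := by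
    field_simp
  have e4 : (x:ℝ)^(2*p) / (x:ℝ)^(2:ℕ) = (x:ℝ)^(2*p-2) := by
    rw [← Real.rpow_natCast (x:ℝ) 2, ← Real.rpow_sub hX]
    norm_num
  rw [e1, e2, e3]
  rw [show (n:ℝ)^(-p) * ((x:ℝ)^(2*p)) * Real.exp (-(x:ℝ)^2/(n:ℝ)) / (x:ℝ)^2
      = ((x:ℝ)^(2*p) / (x:ℝ)^(2:ℕ)) * ((n:ℝ)^(-p) * Real.exp (-(x:ℝ)^2/(n:ℝ))) by ring]
  rw [e4]

noncomputable def embG (p : ℝ) (x : ℕ) (u : ℝ) : ℝ :=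
  Set.indicator (Set.Ioi (((x:ℝ) - 1)/(x:ℝ)^2))
    (fun u => embF p ((⌈u * (x:ℝ)^2⌉₊ : ℝ)/(x:ℝ)^2)) u

def embA (x : ℕ) (k : ℕ) : Set ℝ :=
  Ioc (((x:ℝ) + k - 1)/(x:ℝ)^2) (((x:ℝ) + k)/(x:ℝ)^2)

lemma embA_measurable (x k : ℕ) : MeasurableSet (embA x k) := measurableSet_Ioc

lemma embA_union {x : ℕ} (hx : 1 ≤ x) :
    Ioi (((x:ℝ) - 1)/(x:ℝ)^2) = ⋃ k, embA x k := by
  have hX : (0:ℝ) < x := by exact_mod_cast hx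
  have hX2 : (0:ℝ) < (x:ℝ)^2 := by positivity
  ext u
  simp only [mem_Ioi, mem_iUnion, embA, mem_Ioc]
  constructor
  · intro hu
    have hu' : (x:ℝ) - 1 < u * (x:ℝ)^2 := by
      rw [div_lt_iff₀ hX2] at hu; linarith
    have hupos : 0 < u * (x:ℝ)^2 := by
      nlinarith [hu', (by exact_mod_cast hx : (1:ℝ) ≤ x)]
    set n := ⌈u * (x:ℝ)^2⌉₊ with hn
    have hxn : x ≤ n := by
      have : (x:ℝ) - 1 < n := lt_of_lt_of_le hu' (Nat.le_ceil _)
      have : (x:ℝ) < (n:ℝ) + 1 := by linarith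
      exact_mod_cast Nat.lt_add_one_iff.mp (by exact_mod_cast this)
    refine ⟨n - x, ?_, ?_⟩
    · have hcast : ((x:ℝ) + ((n - x : ℕ):ℝ) - 1) = (n:ℝ) - 1 := by
        have : ((n - x : ℕ):ℝ) = (n:ℝ) - (x:ℝ) := by
          push_cast [Nat.cast_sub hxn]; ring
        rw [this]; ring
      rw [hcast, div_lt_iff₀ hX2]
      have := Nat.ceil_lt_add_one hupos.le
      rw [← hn] at this
      linarith
    · have hcast : ((x:ℝ) + ((n - x : ℕ):ℝ)) = (n:ℝ) := by
        have : ((n - x : ℕ):ℝ) = (n:ℝ) - (x:ℝ) := by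
          push_cast [Nat.cast_sub hxn]; ring
        rw [this]; ring
      rw [hcast, le_div_iff₀ hX2]
      have := Nat.le_ceil (u * (x:ℝ)^2)
      rw [← hn] at this
      linarith
  · rintro ⟨k, hk1, hk2⟩
    have hle : ((x:ℝ) - 1)/(x:ℝ)^2 ≤ ((x:ℝ) + k - 1)/(x:ℝ)^2 := by
      gcongr
      have : (0:ℝ) ≤ k := Nat.cast_nonneg k
      linarith
    exact lt_of_le_of_lt hle hk1

lemma embA_ceil {x : ℕ} (hx : 1 ≤ x) {k : ℕ} {u : ℝ} (hu : u ∈ embA x k) :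
    ⌈u * (x:ℝ)^2⌉₊ = x + k := by
  have hX : (0:ℝ) < x := by exact_mod_cast hx
  have hX2 : (0:ℝ) < (x:ℝ)^2 := by positivity
  obtain ⟨h1, h2⟩ := hu
  rw [div_lt_iff₀ hX2] at h1
  rw [le_div_iff₀ hX2] at h2
  have hne : x + k ≠ 0 := by omega
  rw [Nat.ceil_eq_iff hne]
  constructor
  · have hc : ((x + k - 1 : ℕ):ℝ) = (x:ℝ) + k - 1 := by
      have h1' : 1 ≤ x + k := by omega
      push_cast [Nat.cast_sub h1']
      ring
    rw [hc]; linarith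
  · push_cast; linarith

lemma embA_disjoint {x : ℕ} (hx : 1 ≤ x) : Pairwise (Function.onFun Disjoint (embA x)) := by
  have hX2 : (0:ℝ) < (x:ℝ)^2 := by positivity
  have key : ∀ i j : ℕ, i < j → Disjoint (embA x i) (embA x j) := by
    intro i j hij
    apply Set.Ioc_disjoint_Ioc.mpr
    have hij' : (i:ℝ) + 1 ≤ j := by exact_mod_cast hij
    have h1 : ((x:ℝ) + i)/(x:ℝ)^2 ≤ ((x:ℝ) + j - 1)/(x:ℝ)^2 := by
      gcongr
      linarith
    calc min (((x:ℝ) + i)/(x:ℝ)^2) (((x:ℝ) + j)/(x:ℝ)^2) ≤ ((x:ℝ) + i)/(x:ℝ)^2 := min_le_left _ _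
    _ ≤ ((x:ℝ) + j - 1)/(x:ℝ)^2 := h1
    _ ≤ max (((x:ℝ) + i - 1)/(x:ℝ)^2) (((x:ℝ) + j - 1)/(x:ℝ)^2) := le_max_right _ _
  intro i j hij
  rcases lt_or_gt_of_ne hij with h | h
  · exact key i j h
  · exact (key j i h).symm

lemma embF_measurable (p : ℝ) : Measurable (embF p) := by
  unfold embF
  fun_prop

lemma embG_measurable (p : ℝ) (x : ℕ) : Measurable (embG p x) := by
  unfold embG
  apply Measurable.indicator _ measurableSet_Ioi
  apply (embF_measurable p).comp
  apply Measurable.div_const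
  exact measurable_from_top.comp ((measurable_id.mul_const _).nat_ceil)

noncomputable def embD (p : ℝ) (u : ℝ) : ℝ :=
  if 1 < u then u ^ (-p) else ((Nat.ceil p).factorial : ℝ)

lemma embD_integrable {p : ℝ} (hp : 1 < p) : IntegrableOn (embD p) (Ioi (0:ℝ)) := by
  have h1 : IntegrableOn (embD p) (Ioc (0:ℝ) 1) := by
    apply IntegrableOn.congr_fun (f := fun _ => ((Nat.ceil p).factorial : ℝ))
    · exact (integrableOn_const_iff (by simp)).mpr (Or.inr (by simp [Real.volume_Ioc]))
    · intro u hu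
      simp only [embD]
      rw [if_neg (not_lt.mpr (mem_Ioc.mp hu).2)]
    · exact measurableSet_Ioc
  have h2 : IntegrableOn (embD p) (Ioi (1:ℝ)) := by
    apply IntegrableOn.congr_fun (f := fun u : ℝ => u ^ (-p))
    · exact integrableOn_Ioi_rpow_of_lt (by linarith) one_pos
    · intro u hu
      simp only [embD]
      rw [if_pos (mem_Ioi.mp hu)]
    · exact measurableSet_Ioi
  have : Ioi (0:ℝ) = Ioc 0 1 ∪ Ioi 1 := (Ioc_union_Ioi_eq_Ioi zero_le_one).symm
  rw [this]
  exact h1.union h2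

lemma embD_nonneg (p : ℝ) {u : ℝ} (hu : 0 < u) : 0 ≤ embD p u := by
  unfold embD
  split
  · positivity
  · positivity

lemma embH_le_embD {p : ℝ} (hp : 1 ≤ p) {x : ℕ} (hx : 1 ≤ x) {u : ℝ} (hu : 0 < u) :
    embF p ((⌈u * (x:ℝ)^2⌉₊ : ℝ)/(x:ℝ)^2) ≤ embD p u := by
  have hX2 : (0:ℝ) < (x:ℝ)^2 := by positivity
  set v : ℝ := (⌈u * (x:ℝ)^2⌉₊ : ℝ)/(x:ℝ)^2 with hv
  have hvu : u ≤ v := by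
    rw [hv, le_div_iff₀ hX2]
    exact Nat.le_ceil _
  have hv0 : 0 < v := lt_of_lt_of_le hu hvu
  unfold embD
  split
  · rename_i h1
    calc embF p v ≤ embF p u := embF_anti p hp h1.le hvu
    _ ≤ u ^ (-p) * 1 := by
        unfold embF
        apply mul_le_mul_of_nonneg_left _ (by positivity)
        exact Real.exp_le_one_iff.mpr (by rw [neg_div]; exact neg_nonpos.mpr (by positivity))
    _ = u ^ (-p) := by ring
  · exact embF_le_factorial p (by linarith) hv0

lemma embG_le_embD {p : ℝ} (hp : 1 ≤ p) {x : ℕ} (hx : 1 ≤ x) {u : ℝ} (hu : 0 < u) :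
    ‖embG p x u‖ ≤ embD p u := by
  unfold embG
  by_cases h : u ∈ Set.Ioi (((x:ℝ) - 1)/(x:ℝ)^2)
  · rw [Set.indicator_of_mem h]
    rw [Real.norm_eq_abs, abs_of_nonneg (embF_nonneg p (by positivity))]
    exact embH_le_embD hp hx hu
  · rw [Set.indicator_of_notMem h]
    simpa using embD_nonneg p hu

lemma embG_integral {p : ℝ} (hp : 1 < p) {x : ℕ} (hx : 1 ≤ x) :
    ∫ u in Ioi (0:ℝ), embG p x u
      = ∑' k : ℕ, embF p (((x + k : ℕ):ℝ)/(x:ℝ)^2) / (x:ℝ)^2 := by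
  have hX : (0:ℝ) < x := by exact_mod_cast hx
  have hX2 : (0:ℝ) < (x:ℝ)^2 := by positivity
  have hb : (0:ℝ) ≤ ((x:ℝ) - 1)/(x:ℝ)^2 := by
    apply div_nonneg _ hX2.le
    have : (1:ℝ) ≤ x := by exact_mod_cast hx
    linarith
  set b := ((x:ℝ) - 1)/(x:ℝ)^2 with hbdef
  set H : ℝ → ℝ := fun u => embF p ((⌈u * (x:ℝ)^2⌉₊ : ℝ)/(x:ℝ)^2) with hH
  have hHmeas : Measurable H := by
    apply (embF_measurable p).comp
    apply Measurable.div_const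
    exact measurable_from_top.comp ((measurable_id.mul_const _).nat_ceil)
  have step1 : ∫ u in Ioi (0:ℝ), embG p x u = ∫ u in Ioi b, H u := by
    unfold embG
    rw [setIntegral_indicator measurableSet_Ioi]
    congr 1
    rw [Set.Ioi_inter_Ioi, ← hbdef, max_eq_right hb]
  rw [step1]
  have hIntH : IntegrableOn H (Ioi b) := by
    apply Integrable.mono' ((embD_integrable hp).mono_set (Ioi_subset_Ioi hb))
    · exact (hHmeas.aestronglyMeasurable).restrict
    · rw [ae_restrict_iff' measurableSet_Ioi]
      apply ae_of_all
      intro u hu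
      have hu0 : 0 < u := lt_of_le_of_lt hb hu
      rw [Real.norm_eq_abs, abs_of_nonneg (embF_nonneg p (by positivity))]
      exact embH_le_embD hp.le hx hu0
  rw [embA_union hx] at hIntH ⊢
  rw [integral_iUnion (embA_measurable x) (embA_disjoint hx) hIntH]
  congr 1
  ext k
  have hmeask : MeasurableSet (embA x k) := embA_measurable x k
  have hconst : ∀ u ∈ embA x k, H u = embF p (((x + k : ℕ):ℝ)/(x:ℝ)^2) := by
    intro u hu
    rw [hH]
    simp only
    rw [embA_ceil hx hu]
  rw [setIntegral_congr_fun hmeask hconst]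
  rw [setIntegral_const, measureReal_def]
  have hvol : (volume (embA x k)).toReal = 1/(x:ℝ)^2 := by
    unfold embA
    rw [Real.volume_Ioc, ENNReal.toReal_ofReal]
    · field_simp; ring
    · rw [sub_nonneg]
      gcongr
      linarith
  rw [hvol]
  rw [smul_eq_mul]
  ring

lemma emb_summable {p : ℝ} (hp : 1 < p) {x : ℕ} (hx : 1 ≤ x) :
    Summable (fun n : ℕ => if x ≤ n then (n:ℝ) ^ (-p) * Real.exp (-(x:ℝ)^2/(n:ℝ)) else 0) := by
  apply Summable.of_nonneg_of_le (f := fun n : ℕ => (n:ℝ) ^ (-p))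
  · intro n
    split
    · positivity
    · exact le_rfl
  · intro n
    split
    · apply mul_le_of_le_one_right (by positivity)
      apply Real.exp_le_one_iff.mpr
      rename_i h
      have : (0:ℝ) < n := by
        have : 1 ≤ n := le_trans hx h
        exact_mod_cast this
      rw [neg_div]; exact neg_nonpos.mpr (by positivity)
    · positivity
  · exact Real.summable_nat_rpow.mpr (by linarith)

lemma embF_continuousAt (p : ℝ) {u : ℝ} (hu : 0 < u) : ContinuousAt (embF p) u := by
  have h1 : ContinuousAt (fun t : ℝ => t ^ (-p)) u :=
    Real.continuousAt_rpow_const u (-p) (Or.inl hu.ne')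
  have h2 : ContinuousAt (fun t : ℝ => Real.exp (-1/t)) u :=
    (Real.continuous_exp.continuousAt).comp
      (ContinuousAt.div continuousAt_const continuousAt_id hu.ne')
  exact h1.mul h2

lemma embG_tendsto (p : ℝ) {u : ℝ} (hu : 0 < u) :
    Tendsto (fun x : ℕ => embG p x u) atTop (nhds (embF p u)) := by
  set v : ℕ → ℝ := fun x => (⌈u * (x:ℝ)^2⌉₊ : ℝ)/(x:ℝ)^2 with hv
  have hvb : ∀ x : ℕ, 1 ≤ x → u ≤ v x ∧ v x ≤ u + 1/(x:ℝ)^2 := by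
    intro x hx
    have hX2 : (0:ℝ) < (x:ℝ)^2 := by
      have : (0:ℝ) < x := by exact_mod_cast hx
      positivity
    constructor
    · rw [hv]; simp only
      rw [le_div_iff₀ hX2]
      exact Nat.le_ceil _
    · rw [hv]; simp only
      rw [div_le_iff₀ hX2]
      have := Nat.ceil_lt_add_one (by positivity : (0:ℝ) ≤ u * (x:ℝ)^2)
      have h2 : (u + 1/(x:ℝ)^2) * (x:ℝ)^2 = u * (x:ℝ)^2 + 1 := by field_simp
      rw [h2]
      linarith
  have hx2lim : Tendsto (fun x : ℕ => 1/(x:ℝ)^2) atTop (nhds 0) := by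
    have h1 : Tendsto (fun x : ℕ => (x:ℝ)^2) atTop atTop :=
      (tendsto_pow_atTop two_ne_zero).comp tendsto_natCast_atTop_atTop
    simpa only [one_div, Pi.inv_def] using h1.inv_tendsto_atTop
  have hvtend : Tendsto v atTop (nhds u) := by
    apply tendsto_of_tendsto_of_tendsto_of_le_of_le' tendsto_const_nhds
      (by simpa using tendsto_const_nhds.add hx2lim)
    · filter_upwards [eventually_ge_atTop 1] with x hx
      exact (hvb x hx).1
    · filter_upwards [eventually_ge_atTop 1] with x hx
      simpa [one_div] using (hvb x hx).2
  have hcomp : Tendsto (fun x : ℕ => embF p (v x)) atTop (nhds (embF p u)) :=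
    (embF_continuousAt p hu).tendsto.comp hvtend
  apply hcomp.congr'
  have hev : ∀ᶠ x : ℕ in atTop, ((x:ℝ) - 1)/(x:ℝ)^2 < u := by
    filter_upwards [eventually_ge_atTop (⌈1/u⌉₊ + 1)] with x hx
    have hx1 : 1 ≤ x := by omega
    have hX : (0:ℝ) < x := by exact_mod_cast hx1
    have hX2 : (0:ℝ) < (x:ℝ)^2 := by positivity
    have hxu : 1/u < (x:ℝ) := by
      have h1 : (⌈1/u⌉₊ : ℝ) + 1 ≤ (x:ℝ) := by exact_mod_cast hx
      have h2 : 1/u ≤ (⌈1/u⌉₊ : ℝ) := Nat.le_ceil _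
      linarith
    rw [div_lt_iff₀ hX2]
    rw [div_lt_iff₀ hu] at hxu
    nlinarith [hxu, hX]
  filter_upwards [hev] with x hx
  unfold embG
  rw [Set.indicator_of_mem (mem_Ioi.mpr hx)]


/-- For any `s > −1`, as `x → ∞`,
`x^{2+s} · ∑_{n ≥ x} n^{−(2+s/2)} e^{−x²/n}` converges to
`∫_0^∞ u^{−(2+s/2)} e^{−1/u} du`. -/
theorem euler_maclaurin_bessel_tail (s : ℝ) (hs : -1 < s) :
    Filter.Tendsto
      (fun x : ℕ => (x : ℝ) ^ (2 + s) *
        ∑' n : ℕ, (if x ≤ n then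
          (n : ℝ) ^ (-(2 + s / 2)) * Real.exp (-(x : ℝ) ^ 2 / n) else 0))
      Filter.atTop
      (nhds (∫ u in Set.Ioi (0 : ℝ), u ^ (-(2 + s / 2)) * Real.exp (-1 / u))) := by
  set p : ℝ := 2 + s/2 with hpdef
  have hp : 1 < p := by rw [hpdef]; linarith
  have hp1 : 1 ≤ p := hp.le
  have hintegrand : (fun u : ℝ => u ^ (-(2 + s/2)) * Real.exp (-1/u)) = embF p := by
    funext u; rw [embF]
  have hmain : Tendsto (fun x : ℕ => ∫ u in Ioi (0:ℝ), embG p x u) atTop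
      (nhds (∫ u in Ioi (0:ℝ), embF p u)) := by
    apply tendsto_integral_filter_of_dominated_convergence (embD p)
    · exact Eventually.of_forall fun x => ((embG_measurable p x).aestronglyMeasurable).restrict
    · filter_upwards [eventually_ge_atTop 1] with x hx
      rw [ae_restrict_iff' measurableSet_Ioi]
      exact ae_of_all _ fun u hu => embG_le_embD hp1 hx hu
    · exact embD_integrable hp
    · rw [ae_restrict_iff' measurableSet_Ioi]
      exact ae_of_all _ fun u hu => embG_tendsto p hu
  rw [← hintegrand] at hmain
  apply hmain.congr'
  filter_upwards [eventually_ge_atTop 1] with x hx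
  have hXR : (1:ℝ) ≤ (x:ℝ) := by exact_mod_cast hx
  rw [show (fun u : ℝ => u ^ (-(2 + s/2)) * Real.exp (-1/u)) = embF p from hintegrand] at *
  rw [embG_integral hp hx]
  have hsum := emb_summable hp hx
  rw [← Summable.sum_add_tsum_nat_add (f := fun n : ℕ => if x ≤ n then
        (n : ℝ) ^ (-p) * Real.exp (-(x : ℝ) ^ 2 / n) else 0) x hsum]
  rw [Finset.sum_eq_zero (fun i hi => if_neg (by
        have := Finset.mem_range.mp hi; omega))]
  rw [zero_add, ← tsum_mul_left]
  apply tsum_congr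
  intro k
  have hif : (if x ≤ k + x then ((k + x : ℕ):ℝ) ^ (-p) * Real.exp (-(x : ℝ)^2 / ((k + x : ℕ):ℝ))
      else 0) = ((k + x : ℕ):ℝ) ^ (-p) * Real.exp (-(x : ℝ)^2 / ((k + x : ℕ):ℝ)) :=
    if_pos (Nat.le_add_left x k)
  rw [hif]
  have hterm := embF_term_eq p (x := x) (n := k + x) hx (by omega)
  rw [show x + k = k + x from Nat.add_comm x k]
  rw [hterm]
  congr 1
  rw [hpdef]
  ring_nf
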